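/- Lyapunov property of the Bregman divergence along the discrete Hessian–Riemannian flow: suppose each g_{i,j} is continuously differentiable and convex on ℝ⁴ and f : (0,∞) → ℝ is strictly increasing. Let Y* ∈ M_h satisfy F_h(Y*) = 0, and let Y : [0,S) → M_h be differentiable and satisfy the HRF equations on [0,S). Then for every s ∈ [0,S), (d/ds) D_E(Y*, Y(s)) = −⟨F_h(Y(s)) − F_h(Y*), Y(s) − Y*⟩_{h,Δt} ≤ 0; in particular, s ↦ D_E(Y*, Y(s)) is nonincreasing on [0,S). -/

import Mathlib

open scoped BigOperators

/-- Grid functions on the periodic `N × N` grid `(ℤ/Nℤ)²`. -/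
abbrev Grid (N : ℕ) : Type := ZMod N → ZMod N → ℝ

/-- Mesh size `h = 1/N`. -/
noncomputable def gridh (N : ℕ) : ℝ := 1 / N

/-- Discrete pairing `⟨a,b⟩_h = h² ∑_{i,j} a_{ij} b_{ij}`. -/
noncomputable def pairh (N : ℕ) [NeZero N] (a b : Grid N) : ℝ :=
  gridh N ^ 2 * ∑ i : ZMod N, ∑ j : ZMod N, a i j * b i j

/-- One-sided difference `(D₁⁺ y)_{ij} = (y_{i+1,j} - y_{ij}) / h`. -/
noncomputable def D1p (N : ℕ) (y : Grid N) : Grid N := fun i j => (y (i + 1) j - y i j) / gridh N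

/-- One-sided difference `(D₁⁻ y)_{ij} = (y_{ij} - y_{i-1,j}) / h`. -/
noncomputable def D1m (N : ℕ) (y : Grid N) : Grid N := fun i j => (y i j - y (i - 1) j) / gridh N

/-- One-sided difference `(D₂⁺ y)_{ij} = (y_{i,j+1} - y_{ij}) / h`. -/
noncomputable def D2p (N : ℕ) (y : Grid N) : Grid N := fun i j => (y i (j + 1) - y i j) / gridh N

/-- One-sided difference `(D₂⁻ y)_{ij} = (y_{ij} - y_{i,j-1}) / h`. -/
noncomputable def D2m (N : ℕ) (y : Grid N) : Grid N := fun i j => (y i j - y i (j - 1)) / gridh N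

/-- Five-point discrete Laplacian. -/
noncomputable def lapFD (N : ℕ) (y : Grid N) : Grid N :=
  fun i j => -(4 * y i j - y (i + 1) j - y (i - 1) j - y i (j + 1) - y i (j - 1)) / gridh N ^ 2

/-- Upwind stencil `[D_h y]_{ij} ∈ ℝ⁴`. -/
noncomputable def DHs (N : ℕ) (y : Grid N) (i j : ZMod N) : Fin 4 → ℝ :=
  ![D1p N y i j, D1m N y i j, D2p N y i j, D2m N y i j]

/-- `α^{(ℓ)}(U)_{ij} = (∂g_{ij}/∂q_ℓ)([D_h U]_{ij})`. -/
noncomputable def alphaFD (N : ℕ) (g : ZMod N → ZMod N → (Fin 4 → ℝ) → ℝ)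
    (U : Grid N) (l : Fin 4) : Grid N :=
  fun i j => fderiv ℝ (g i j) (DHs N U i j) (Pi.single l 1)

/-- Discrete transport operator `B_h(U, M)`. -/
noncomputable def Bh (N : ℕ) (g : ZMod N → ZMod N → (Fin 4 → ℝ) → ℝ) (U M : Grid N) : Grid N :=
  fun i j =>
    -D1m N (fun a b => M a b * alphaFD N g U 0 a b) i j
      - D1p N (fun a b => M a b * alphaFD N g U 1 a b) i j
      - D2m N (fun a b => M a b * alphaFD N g U 2 a b) i j
      - D2p N (fun a b => M a b * alphaFD N g U 3 a b) i j

/-- HJB residual block `r_k`. -/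
noncomputable def rkFD (N : ℕ) (g : ZMod N → ZMod N → (Fin 4 → ℝ) → ℝ) (f : ℝ → ℝ)
    (Vh : Grid N) (ν Δt : ℝ) (M U : ℕ → Grid N) (k : ℕ) : Grid N :=
  fun i j => (U k i j - U (k - 1) i j) / Δt + ν * lapFD N (U (k - 1)) i j
    - g i j (DHs N (U (k - 1)) i j) + f (M k i j) + Vh i j

/-- Fokker–Planck residual block `s_k`. -/
noncomputable def skFD (N : ℕ) (g : ZMod N → ZMod N → (Fin 4 → ℝ) → ℝ)
    (ν Δt : ℝ) (M U : ℕ → Grid N) (k : ℕ) : Grid N :=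
  fun i j => (M k i j - M (k - 1) i j) / Δt - ν * lapFD N (M k) i j
    + Bh N g (U (k - 1)) (M k) i j

/-- `r̄_k = ⟨M_k, r_k⟩_h / ⟨M_k, 1⟩_h`. -/
noncomputable def rbarFD (N : ℕ) [NeZero N] (g : ZMod N → ZMod N → (Fin 4 → ℝ) → ℝ) (f : ℝ → ℝ)
    (Vh : Grid N) (ν Δt : ℝ) (M U : ℕ → Grid N) (k : ℕ) : ℝ :=
  pairh N (M k) (rkFD N g f Vh ν Δt M U k) / pairh N (M k) (fun _ _ => 1)

/-- Entropy functional `E(Y)`. -/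
noncomputable def entE (N : ℕ) [NeZero N] (NT : ℕ) (Δt : ℝ) (M U : ℕ → Grid N) : ℝ :=
  Δt * ∑ k ∈ Finset.Icc 1 NT, pairh N (M k) (fun i j => Real.log (M k i j) - 1)
    + Δt / 2 * ∑ k ∈ Finset.range NT, pairh N (U k) (U k)

/-- Bregman divergence of the entropy, `D_E(Y*, Y)`. -/
noncomputable def DE (N : ℕ) [NeZero N] (NT : ℕ) (Δt : ℝ) (M' U' M U : ℕ → Grid N) : ℝ :=
  entE N NT Δt M' U' - entE N NT Δt M U
    - (Δt * ∑ k ∈ Finset.Icc 1 NT,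
        pairh N (fun i j => Real.log (M k i j)) (fun i j => M' k i j - M k i j)
      + Δt * ∑ k ∈ Finset.range NT, pairh N (U k) (fun i j => U' k i j - U k i j))

/-- The Hessian–Riemannian flow equations on a set `D` of artificial times. -/
def IsHRFOn (N : ℕ) [NeZero N] (NT : ℕ) (g : ZMod N → ZMod N → (Fin 4 → ℝ) → ℝ)
    (f : ℝ → ℝ) (Vh : Grid N) (ν Δt : ℝ)
    (Ms Us : ℝ → ℕ → Grid N) (D : Set ℝ) : Prop :=
  ∀ s ∈ D, ∀ k ∈ Finset.Icc 1 NT,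
    (∀ i j, HasDerivWithinAt (fun t => Ms t k i j)
      (-(Ms s k i j) * (rkFD N g f Vh ν Δt (Ms s) (Us s) k i j
        - rbarFD N g f Vh ν Δt (Ms s) (Us s) k)) D s) ∧
    (∀ i j, HasDerivWithinAt (fun t => Us t (k - 1) i j)
      (-(skFD N g ν Δt (Ms s) (Us s) k i j)) D s)

section A
variable {N : ℕ} [NeZero N]

lemma sum2_shift_i (F : ZMod N → ZMod N → ℝ) (c : ZMod N) :
    ∑ i : ZMod N, ∑ j : ZMod N, F (i + c) j = ∑ i : ZMod N, ∑ j : ZMod N, F i j :=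
  Fintype.sum_equiv (Equiv.addRight c) _ _ (fun _ => rfl)

lemma sum2_shift_j (F : ZMod N → ZMod N → ℝ) (c : ZMod N) :
    ∑ i : ZMod N, ∑ j : ZMod N, F i (j + c) = ∑ i : ZMod N, ∑ j : ZMod N, F i j :=
  Finset.sum_congr rfl fun i _ => Fintype.sum_equiv (Equiv.addRight c) _ _ (fun _ => rfl)

lemma shift_ip (a b : Grid N) :
    ∑ i : ZMod N, ∑ j : ZMod N, a (i + 1) j * b i j
      = ∑ i : ZMod N, ∑ j : ZMod N, a i j * b (i - 1) j := by
  have := sum2_shift_i (fun i j => a i j * b (i - 1) j) 1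
  simpa using this

lemma shift_im (a b : Grid N) :
    ∑ i : ZMod N, ∑ j : ZMod N, a (i - 1) j * b i j
      = ∑ i : ZMod N, ∑ j : ZMod N, a i j * b (i + 1) j := by
  have := sum2_shift_i (fun i j => a i j * b (i + 1) j) (-1)
  simp only [← sub_eq_add_neg, sub_add_cancel] at this
  exact this

lemma shift_jp (a b : Grid N) :
    ∑ i : ZMod N, ∑ j : ZMod N, a i (j + 1) * b i j
      = ∑ i : ZMod N, ∑ j : ZMod N, a i j * b i (j - 1) := by
  have := sum2_shift_j (fun i j => a i j * b i (j - 1)) 1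
  simpa using this

lemma shift_jm (a b : Grid N) :
    ∑ i : ZMod N, ∑ j : ZMod N, a i (j - 1) * b i j
      = ∑ i : ZMod N, ∑ j : ZMod N, a i j * b i (j + 1) := by
  have := sum2_shift_j (fun i j => a i j * b i (j + 1)) (-1)
  simp only [← sub_eq_add_neg, sub_add_cancel] at this
  exact this

lemma sum2_congr {F G : ZMod N → ZMod N → ℝ} (h : ∀ i j, F i j = G i j) :
    ∑ i : ZMod N, ∑ j : ZMod N, F i j = ∑ i : ZMod N, ∑ j : ZMod N, G i j :=
  Finset.sum_congr rfl fun i _ => Finset.sum_congr rfl fun j _ => h i j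

lemma lap_sym (a b : Grid N) :
    ∑ i : ZMod N, ∑ j : ZMod N, lapFD N a i j * b i j
      = ∑ i : ZMod N, ∑ j : ZMod N, a i j * lapFD N b i j := by
  have e1 : ∀ (y z : Grid N), ∑ i : ZMod N, ∑ j : ZMod N, lapFD N y i j * z i j
      = (gridh N ^ 2)⁻¹ *
        (-(4 * ∑ i : ZMod N, ∑ j : ZMod N, y i j * z i j)
          + (∑ i : ZMod N, ∑ j : ZMod N, y (i + 1) j * z i j)
          + (∑ i : ZMod N, ∑ j : ZMod N, y (i - 1) j * z i j)
          + (∑ i : ZMod N, ∑ j : ZMod N, y i (j + 1) * z i j)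
          + (∑ i : ZMod N, ∑ j : ZMod N, y i (j - 1) * z i j)) := by
    intro y z
    simp only [Finset.mul_sum, mul_add, mul_neg, ← Finset.sum_add_distrib, ← Finset.sum_neg_distrib]
    refine sum2_congr fun i j => ?_
    simp only [lapFD]
    field_simp
    ring
  have e2 : ∀ (y z : Grid N), ∑ i : ZMod N, ∑ j : ZMod N, y i j * lapFD N z i j
      = (gridh N ^ 2)⁻¹ *
        (-(4 * ∑ i : ZMod N, ∑ j : ZMod N, y i j * z i j)
          + (∑ i : ZMod N, ∑ j : ZMod N, y i j * z (i - 1) j)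
          + (∑ i : ZMod N, ∑ j : ZMod N, y i j * z (i + 1) j)
          + (∑ i : ZMod N, ∑ j : ZMod N, y i j * z i (j - 1))
          + (∑ i : ZMod N, ∑ j : ZMod N, y i j * z i (j + 1))) := by
    intro y z
    simp only [Finset.mul_sum, mul_add, mul_neg, ← Finset.sum_add_distrib, ← Finset.sum_neg_distrib]
    refine sum2_congr fun i j => ?_
    simp only [lapFD]
    field_simp
    ring
  rw [e1, e2, shift_ip, shift_im, shift_jp, shift_jm]

lemma sum2_mul_sub (c : ℝ) (F G : ZMod N → ZMod N → ℝ) :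
    ∑ i : ZMod N, ∑ j : ZMod N, c * (F i j - G i j)
      = c * ((∑ i : ZMod N, ∑ j : ZMod N, F i j) - ∑ i : ZMod N, ∑ j : ZMod N, G i j) := by
  simp [Finset.mul_sum, Finset.sum_sub_distrib, mul_sub]

lemma D1m_adj (a b : Grid N) :
    ∑ i : ZMod N, ∑ j : ZMod N, D1m N a i j * b i j
      = -∑ i : ZMod N, ∑ j : ZMod N, a i j * D1p N b i j := by
  have L : (∑ i : ZMod N, ∑ j : ZMod N, D1m N a i j * b i j)
      = (gridh N)⁻¹ * ((∑ i : ZMod N, ∑ j : ZMod N, a i j * b i j)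
          - ∑ i : ZMod N, ∑ j : ZMod N, a (i - 1) j * b i j) :=
    (sum2_congr fun i j => by simp only [D1m]; ring).trans (sum2_mul_sub _ _ _)
  have R : (∑ i : ZMod N, ∑ j : ZMod N, a i j * D1p N b i j)
      = (gridh N)⁻¹ * ((∑ i : ZMod N, ∑ j : ZMod N, a i j * b (i + 1) j)
          - ∑ i : ZMod N, ∑ j : ZMod N, a i j * b i j) :=
    (sum2_congr fun i j => by simp only [D1p]; ring).trans (sum2_mul_sub _ _ _)
  rw [L, R, shift_im a b]; ring

lemma D1p_adj (a b : Grid N) :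
    ∑ i : ZMod N, ∑ j : ZMod N, D1p N a i j * b i j
      = -∑ i : ZMod N, ∑ j : ZMod N, a i j * D1m N b i j := by
  have L : (∑ i : ZMod N, ∑ j : ZMod N, D1p N a i j * b i j)
      = (gridh N)⁻¹ * ((∑ i : ZMod N, ∑ j : ZMod N, a (i + 1) j * b i j)
          - ∑ i : ZMod N, ∑ j : ZMod N, a i j * b i j) :=
    (sum2_congr fun i j => by simp only [D1p]; ring).trans (sum2_mul_sub _ _ _)
  have R : (∑ i : ZMod N, ∑ j : ZMod N, a i j * D1m N b i j)
      = (gridh N)⁻¹ * ((∑ i : ZMod N, ∑ j : ZMod N, a i j * b i j)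
          - ∑ i : ZMod N, ∑ j : ZMod N, a i j * b (i - 1) j) :=
    (sum2_congr fun i j => by simp only [D1m]; ring).trans (sum2_mul_sub _ _ _)
  rw [L, R, shift_ip a b]; ring

lemma D2m_adj (a b : Grid N) :
    ∑ i : ZMod N, ∑ j : ZMod N, D2m N a i j * b i j
      = -∑ i : ZMod N, ∑ j : ZMod N, a i j * D2p N b i j := by
  have L : (∑ i : ZMod N, ∑ j : ZMod N, D2m N a i j * b i j)
      = (gridh N)⁻¹ * ((∑ i : ZMod N, ∑ j : ZMod N, a i j * b i j)
          - ∑ i : ZMod N, ∑ j : ZMod N, a i (j - 1) * b i j) :=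
    (sum2_congr fun i j => by simp only [D2m]; ring).trans (sum2_mul_sub _ _ _)
  have R : (∑ i : ZMod N, ∑ j : ZMod N, a i j * D2p N b i j)
      = (gridh N)⁻¹ * ((∑ i : ZMod N, ∑ j : ZMod N, a i j * b i (j + 1))
          - ∑ i : ZMod N, ∑ j : ZMod N, a i j * b i j) :=
    (sum2_congr fun i j => by simp only [D2p]; ring).trans (sum2_mul_sub _ _ _)
  rw [L, R, shift_jm a b]; ring

lemma D2p_adj (a b : Grid N) :
    ∑ i : ZMod N, ∑ j : ZMod N, D2p N a i j * b i j
      = -∑ i : ZMod N, ∑ j : ZMod N, a i j * D2m N b i j := by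
  have L : (∑ i : ZMod N, ∑ j : ZMod N, D2p N a i j * b i j)
      = (gridh N)⁻¹ * ((∑ i : ZMod N, ∑ j : ZMod N, a i (j + 1) * b i j)
          - ∑ i : ZMod N, ∑ j : ZMod N, a i j * b i j) :=
    (sum2_congr fun i j => by simp only [D2p]; ring).trans (sum2_mul_sub _ _ _)
  have R : (∑ i : ZMod N, ∑ j : ZMod N, a i j * D2m N b i j)
      = (gridh N)⁻¹ * ((∑ i : ZMod N, ∑ j : ZMod N, a i j * b i j)
          - ∑ i : ZMod N, ∑ j : ZMod N, a i j * b i (j - 1)) :=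
    (sum2_congr fun i j => by simp only [D2m]; ring).trans (sum2_mul_sub _ _ _)
  rw [L, R, shift_jp a b]; ring


lemma fderiv_apply_vec (φ : (Fin 4 → ℝ) → ℝ) (q v : Fin 4 → ℝ) :
    fderiv ℝ φ q v = ∑ l : Fin 4, v l * fderiv ℝ φ q (Pi.single l 1) := by
  have hv : v = ∑ l : Fin 4, v l • (Pi.single l 1 : Fin 4 → ℝ) := by
    funext m
    simp [Pi.single_apply, Finset.sum_ite_eq']
  conv_lhs => rw [hv]
  rw [map_sum]
  simp [smul_eq_mul]

lemma DHs_sub (U V : Grid N) (i j : ZMod N) :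
    DHs N (fun a b => U a b - V a b) i j = DHs N U i j - DHs N V i j := by
  funext l
  fin_cases l <;>
    simp [DHs, D1p, D1m, D2p, D2m, sub_div] <;> ring

/-- summation by parts for the transport operator -/
lemma Bh_pair (g : ZMod N → ZMod N → (Fin 4 → ℝ) → ℝ) (U M W : Grid N) :
    ∑ i : ZMod N, ∑ j : ZMod N, Bh N g U M i j * W i j
      = ∑ i : ZMod N, ∑ j : ZMod N,
          M i j * fderiv ℝ (g i j) (DHs N U i j) (DHs N W i j) := by
  have split : ∑ i : ZMod N, ∑ j : ZMod N, Bh N g U M i j * W i j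
      = -(∑ i : ZMod N, ∑ j : ZMod N, D1m N (fun a b => M a b * alphaFD N g U 0 a b) i j * W i j)
        - (∑ i : ZMod N, ∑ j : ZMod N, D1p N (fun a b => M a b * alphaFD N g U 1 a b) i j * W i j)
        - (∑ i : ZMod N, ∑ j : ZMod N, D2m N (fun a b => M a b * alphaFD N g U 2 a b) i j * W i j)
        - (∑ i : ZMod N, ∑ j : ZMod N, D2p N (fun a b => M a b * alphaFD N g U 3 a b) i j * W i j) := by
    simp only [Bh, sub_mul, neg_mul, Finset.sum_sub_distrib, Finset.sum_neg_distrib]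
  rw [split, D1m_adj, D1p_adj, D2m_adj, D2p_adj]
  simp only [neg_neg, sub_neg_eq_add, ← Finset.sum_add_distrib]
  refine sum2_congr fun i j => ?_
  rw [fderiv_apply_vec (g i j) (DHs N U i j) (DHs N W i j)]
  have : ∀ y : Grid N, DHs N y i j 0 = D1p N y i j ∧ DHs N y i j 1 = D1m N y i j
      ∧ DHs N y i j 2 = D2p N y i j ∧ DHs N y i j 3 = D2m N y i j := by
    intro y; refine ⟨rfl, rfl, rfl, rfl⟩
  rw [Fin.sum_univ_four]
  obtain ⟨h0, h1, h2, h3⟩ := this W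
  rw [h0, h1, h2, h3]
  simp only [alphaFD]
  ring

/-- gradient inequality for convex C¹ functions -/
lemma convex_grad_ineq (φ : (Fin 4 → ℝ) → ℝ) (hφ : ContDiff ℝ 1 φ)
    (hc : ConvexOn ℝ Set.univ φ) (q p : Fin 4 → ℝ) :
    φ q + fderiv ℝ φ q (p - q) ≤ φ p := by
  have hcc : ConvexOn ℝ Set.univ (φ ∘ (AffineMap.lineMap q p : ℝ →ᵃ[ℝ] (Fin 4 → ℝ))) := by
    simpa using hc.comp_affineMap (AffineMap.lineMap q p)
  have h1 : HasDerivAt (fun t : ℝ => q + t • (p - q)) (p - q) 0 := by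
    simpa using ((hasDerivAt_id (0 : ℝ)).smul_const (p - q)).const_add q
  have h2 : HasFDerivAt φ (fderiv ℝ φ q) (q + (0 : ℝ) • (p - q)) := by
    simpa using (hφ.differentiable one_ne_zero q).hasFDerivAt
  have hcomp : HasDerivAt (fun t : ℝ => φ (q + t • (p - q))) (fderiv ℝ φ q (p - q)) 0 :=
    h2.comp_hasDerivAt 0 h1
  have hfun : (φ ∘ (AffineMap.lineMap q p : ℝ →ᵃ[ℝ] (Fin 4 → ℝ)))
      = fun t : ℝ => φ (q + t • (p - q)) := by
    funext t
    simp only [Function.comp_apply, AffineMap.lineMap_apply_module]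
    congr 1
    module
  have hd : HasDerivAt (φ ∘ (AffineMap.lineMap q p : ℝ →ᵃ[ℝ] (Fin 4 → ℝ)))
      (fderiv ℝ φ q (p - q)) 0 := by rw [hfun]; exact hcomp
  have key := hcc.le_slope_of_hasDerivAt (Set.mem_univ (0 : ℝ)) (Set.mem_univ (1 : ℝ))
    one_pos hd
  rw [slope_def_field] at key
  simp only [Function.comp_apply, AffineMap.lineMap_apply_module, one_smul, zero_smul,
    zero_add, add_zero, sub_zero, div_one, sub_self] at key
  linarith

end A


section A2
variable {N : ℕ} [NeZero N]

lemma lap_sub (U V : Grid N) (i j : ZMod N) :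
    lapFD N (fun a b => U a b - V a b) i j = lapFD N U i j - lapFD N V i j := by
  simp only [lapFD]; ring

lemma sum2_add (F G : ZMod N → ZMod N → ℝ) :
    ∑ i : ZMod N, ∑ j : ZMod N, (F i j + G i j)
      = (∑ i : ZMod N, ∑ j : ZMod N, F i j) + ∑ i : ZMod N, ∑ j : ZMod N, G i j := by
  simp [Finset.sum_add_distrib]

lemma sum2_sub' (F G : ZMod N → ZMod N → ℝ) :
    ∑ i : ZMod N, ∑ j : ZMod N, (F i j - G i j)
      = (∑ i : ZMod N, ∑ j : ZMod N, F i j) - ∑ i : ZMod N, ∑ j : ZMod N, G i j := by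
  simp [Finset.sum_sub_distrib]

lemma sum2_div (F : ZMod N → ZMod N → ℝ) (c : ℝ) :
    ∑ i : ZMod N, ∑ j : ZMod N, F i j / c
      = (∑ i : ZMod N, ∑ j : ZMod N, F i j) / c := by
  simp [Finset.sum_div]

lemma icc_sum_eq (G : ℕ → ℝ) (NT : ℕ) :
    ∑ k ∈ Finset.Icc 1 NT, G k = ∑ k ∈ Finset.range NT, G (k + 1) := by
  rw [← Finset.Ico_add_one_right_eq_Icc, Finset.sum_Ico_eq_sum_range]
  simp only [Nat.add_sub_cancel]
  exact Finset.sum_congr rfl fun i _ => by rw [Nat.add_comm]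

lemma tele (P : ℕ → ℝ) (NT : ℕ) :
    ∑ k ∈ Finset.Icc 1 NT, (P k - P (k - 1)) = P NT - P 0 := by
  rw [icc_sum_eq (fun k => P k - P (k - 1)) NT]
  simp only [Nat.add_sub_cancel]
  exact Finset.sum_range_sub P NT

lemma fmono_node {f : ℝ → ℝ} (hf : StrictMonoOn f (Set.Ioi 0)) {a b : ℝ}
    (ha : 0 < a) (hb : 0 < b) : 0 ≤ (f a - f b) * (a - b) := by
  rcases lt_trichotomy a b with h | h | h
  · have := hf (Set.mem_Ioi.2 ha) (Set.mem_Ioi.2 hb) h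
    nlinarith
  · simp [h]
  · have := hf (Set.mem_Ioi.2 hb) (Set.mem_Ioi.2 ha) h
    nlinarith

lemma DE_eq (NT : ℕ) (Δt : ℝ) (M' U' M U : ℕ → Grid N) :
    DE N NT Δt M' U' M U = entE N NT Δt M' U'
      - Δt * gridh N ^ 2 * ∑ k ∈ Finset.Icc 1 NT, ∑ i : ZMod N, ∑ j : ZMod N,
          (M' k i j * Real.log (M k i j) - M k i j)
      - Δt * gridh N ^ 2 * ∑ k ∈ Finset.range NT, ∑ i : ZMod N, ∑ j : ZMod N,
          (U' k i j * U k i j - U k i j ^ 2 / 2) := by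
  have eM : ∀ k, (∑ i : ZMod N, ∑ j : ZMod N, (M' k i j * Real.log (M k i j) - M k i j))
      = (∑ i : ZMod N, ∑ j : ZMod N, M k i j * (Real.log (M k i j) - 1))
        + ∑ i : ZMod N, ∑ j : ZMod N, Real.log (M k i j) * (M' k i j - M k i j) := by
    intro k
    have h1 : (∑ i : ZMod N, ∑ j : ZMod N, (M' k i j * Real.log (M k i j) - M k i j))
        = ∑ i : ZMod N, ∑ j : ZMod N,
            (M k i j * (Real.log (M k i j) - 1) + Real.log (M k i j) * (M' k i j - M k i j)) :=
      sum2_congr fun i j => by ring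
    rw [h1]
    simp only [Finset.sum_add_distrib]
  have eU : ∀ k, (∑ i : ZMod N, ∑ j : ZMod N, (U' k i j * U k i j - U k i j ^ 2 / 2))
      = (∑ i : ZMod N, ∑ j : ZMod N, U k i j * U k i j) / 2
        + ∑ i : ZMod N, ∑ j : ZMod N, U k i j * (U' k i j - U k i j) := by
    intro k
    have h1 : (∑ i : ZMod N, ∑ j : ZMod N, (U' k i j * U k i j - U k i j ^ 2 / 2))
        = ∑ i : ZMod N, ∑ j : ZMod N,
            (U k i j * U k i j / 2 + U k i j * (U' k i j - U k i j)) :=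
      sum2_congr fun i j => by ring
    rw [h1]
    simp only [Finset.sum_add_distrib, ← Finset.sum_div]
  have hM : (∑ k ∈ Finset.Icc 1 NT, ∑ i : ZMod N, ∑ j : ZMod N,
        (M' k i j * Real.log (M k i j) - M k i j))
      = (∑ k ∈ Finset.Icc 1 NT, ∑ i : ZMod N, ∑ j : ZMod N, M k i j * (Real.log (M k i j) - 1))
        + ∑ k ∈ Finset.Icc 1 NT, ∑ i : ZMod N, ∑ j : ZMod N,
            Real.log (M k i j) * (M' k i j - M k i j) := by
    rw [← Finset.sum_add_distrib]
    exact Finset.sum_congr rfl fun k _ => eM k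
  have hU : (∑ k ∈ Finset.range NT, ∑ i : ZMod N, ∑ j : ZMod N,
        (U' k i j * U k i j - U k i j ^ 2 / 2))
      = (∑ k ∈ Finset.range NT, ∑ i : ZMod N, ∑ j : ZMod N, U k i j * U k i j) / 2
        + ∑ k ∈ Finset.range NT, ∑ i : ZMod N, ∑ j : ZMod N,
            U k i j * (U' k i j - U k i j) := by
    rw [Finset.sum_div, ← Finset.sum_add_distrib]
    exact Finset.sum_congr rfl fun k _ => eU k
  rw [hM, hU]
  simp only [DE, entE, pairh, ← Finset.mul_sum]
  ring

lemma monotonicity_step (g : ZMod N → ZMod N → (Fin 4 → ℝ) → ℝ) (f : ℝ → ℝ)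
    (Vh : Grid N) (ν Δt : ℝ) (M U M' U' : ℕ → Grid N) (k : ℕ) :
    (∑ i : ZMod N, ∑ j : ZMod N,
        (rkFD N g f Vh ν Δt M U k i j - rkFD N g f Vh ν Δt M' U' k i j)
          * (M k i j - M' k i j))
      + ∑ i : ZMod N, ∑ j : ZMod N,
        (skFD N g ν Δt M U k i j - skFD N g ν Δt M' U' k i j)
          * (U (k - 1) i j - U' (k - 1) i j)
    = ((∑ i : ZMod N, ∑ j : ZMod N, (U k i j - U' k i j) * (M k i j - M' k i j))
        - ∑ i : ZMod N, ∑ j : ZMod N,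
            (U (k - 1) i j - U' (k - 1) i j) * (M (k - 1) i j - M' (k - 1) i j)) / Δt
      + (∑ i : ZMod N, ∑ j : ZMod N,
          (M k i j * (g i j (DHs N (U' (k - 1)) i j) - g i j (DHs N (U (k - 1)) i j)
              - fderiv ℝ (g i j) (DHs N (U (k - 1)) i j)
                  (DHs N (U' (k - 1)) i j - DHs N (U (k - 1)) i j))
            + M' k i j * (g i j (DHs N (U (k - 1)) i j) - g i j (DHs N (U' (k - 1)) i j)
              - fderiv ℝ (g i j) (DHs N (U' (k - 1)) i j)
                  (DHs N (U (k - 1)) i j - DHs N (U' (k - 1)) i j))))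
      + ∑ i : ZMod N, ∑ j : ZMod N, (f (M k i j) - f (M' k i j)) * (M k i j - M' k i j) := by
  -- split the HJB pairing
  have hX : (∑ i : ZMod N, ∑ j : ZMod N,
        (rkFD N g f Vh ν Δt M U k i j - rkFD N g f Vh ν Δt M' U' k i j)
          * (M k i j - M' k i j))
      = (∑ i : ZMod N, ∑ j : ZMod N,
          ((U k i j - U' k i j) - (U (k - 1) i j - U' (k - 1) i j)) / Δt
            * (M k i j - M' k i j))
        + ν * (∑ i : ZMod N, ∑ j : ZMod N,
            lapFD N (fun a b => U (k - 1) a b - U' (k - 1) a b) i j * (M k i j - M' k i j))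
        - (∑ i : ZMod N, ∑ j : ZMod N,
            (g i j (DHs N (U (k - 1)) i j) - g i j (DHs N (U' (k - 1)) i j))
              * (M k i j - M' k i j))
        + ∑ i : ZMod N, ∑ j : ZMod N, (f (M k i j) - f (M' k i j)) * (M k i j - M' k i j) := by
    have h1 : (∑ i : ZMod N, ∑ j : ZMod N,
          (rkFD N g f Vh ν Δt M U k i j - rkFD N g f Vh ν Δt M' U' k i j)
            * (M k i j - M' k i j))
        = ∑ i : ZMod N, ∑ j : ZMod N,
            (((U k i j - U' k i j) - (U (k - 1) i j - U' (k - 1) i j)) / Δt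
                * (M k i j - M' k i j)
              + ν * (lapFD N (fun a b => U (k - 1) a b - U' (k - 1) a b) i j
                  * (M k i j - M' k i j))
              - (g i j (DHs N (U (k - 1)) i j) - g i j (DHs N (U' (k - 1)) i j))
                  * (M k i j - M' k i j)
              + (f (M k i j) - f (M' k i j)) * (M k i j - M' k i j)) :=
      sum2_congr fun i j => by simp only [rkFD, lap_sub]; ring
    rw [h1]
    simp only [Finset.sum_add_distrib, Finset.sum_sub_distrib, ← Finset.mul_sum]
  -- split the FP pairing
  have hY : (∑ i : ZMod N, ∑ j : ZMod N,
        (skFD N g ν Δt M U k i j - skFD N g ν Δt M' U' k i j)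
          * (U (k - 1) i j - U' (k - 1) i j))
      = (∑ i : ZMod N, ∑ j : ZMod N,
          ((M k i j - M' k i j) - (M (k - 1) i j - M' (k - 1) i j)) / Δt
            * (U (k - 1) i j - U' (k - 1) i j))
        - ν * (∑ i : ZMod N, ∑ j : ZMod N,
            lapFD N (fun a b => M k a b - M' k a b) i j * (U (k - 1) i j - U' (k - 1) i j))
        + ((∑ i : ZMod N, ∑ j : ZMod N,
            Bh N g (U (k - 1)) (M k) i j * (U (k - 1) i j - U' (k - 1) i j))
          - ∑ i : ZMod N, ∑ j : ZMod N,
            Bh N g (U' (k - 1)) (M' k) i j * (U (k - 1) i j - U' (k - 1) i j)) := by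
    have h1 : (∑ i : ZMod N, ∑ j : ZMod N,
          (skFD N g ν Δt M U k i j - skFD N g ν Δt M' U' k i j)
            * (U (k - 1) i j - U' (k - 1) i j))
        = ∑ i : ZMod N, ∑ j : ZMod N,
            (((M k i j - M' k i j) - (M (k - 1) i j - M' (k - 1) i j)) / Δt
                * (U (k - 1) i j - U' (k - 1) i j)
              - ν * (lapFD N (fun a b => M k a b - M' k a b) i j
                  * (U (k - 1) i j - U' (k - 1) i j))
              + (Bh N g (U (k - 1)) (M k) i j * (U (k - 1) i j - U' (k - 1) i j)
                - Bh N g (U' (k - 1)) (M' k) i j * (U (k - 1) i j - U' (k - 1) i j))) :=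
      sum2_congr fun i j => by simp only [skFD, lap_sub]; ring
    rw [h1]
    simp only [Finset.sum_add_distrib, Finset.sum_sub_distrib, ← Finset.mul_sum]
  -- viscosity terms cancel
  have hVis : (∑ i : ZMod N, ∑ j : ZMod N,
        lapFD N (fun a b => U (k - 1) a b - U' (k - 1) a b) i j * (M k i j - M' k i j))
      = ∑ i : ZMod N, ∑ j : ZMod N,
          lapFD N (fun a b => M k a b - M' k a b) i j * (U (k - 1) i j - U' (k - 1) i j) := by
    rw [lap_sym]
    exact sum2_congr fun i j => by ring
  -- transport summation by parts
  have hB1 : (∑ i : ZMod N, ∑ j : ZMod N,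
        Bh N g (U (k - 1)) (M k) i j * (U (k - 1) i j - U' (k - 1) i j))
      = ∑ i : ZMod N, ∑ j : ZMod N,
          M k i j * fderiv ℝ (g i j) (DHs N (U (k - 1)) i j)
            (DHs N (U (k - 1)) i j - DHs N (U' (k - 1)) i j) := by
    exact Eq.trans (Bh_pair g (U (k - 1)) (M k) (fun a b => U (k - 1) a b - U' (k - 1) a b))
      (sum2_congr fun i j => by rw [DHs_sub])
  have hB2 : (∑ i : ZMod N, ∑ j : ZMod N,
        Bh N g (U' (k - 1)) (M' k) i j * (U (k - 1) i j - U' (k - 1) i j))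
      = ∑ i : ZMod N, ∑ j : ZMod N,
          M' k i j * fderiv ℝ (g i j) (DHs N (U' (k - 1)) i j)
            (DHs N (U (k - 1)) i j - DHs N (U' (k - 1)) i j) := by
    exact Eq.trans (Bh_pair g (U' (k - 1)) (M' k) (fun a b => U (k - 1) a b - U' (k - 1) a b))
      (sum2_congr fun i j => by rw [DHs_sub])
  -- time terms telescope
  have hTime : (∑ i : ZMod N, ∑ j : ZMod N,
        ((U k i j - U' k i j) - (U (k - 1) i j - U' (k - 1) i j)) / Δt
          * (M k i j - M' k i j))
      + (∑ i : ZMod N, ∑ j : ZMod N,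
          ((M k i j - M' k i j) - (M (k - 1) i j - M' (k - 1) i j)) / Δt
            * (U (k - 1) i j - U' (k - 1) i j))
      = ((∑ i : ZMod N, ∑ j : ZMod N, (U k i j - U' k i j) * (M k i j - M' k i j))
          - ∑ i : ZMod N, ∑ j : ZMod N,
              (U (k - 1) i j - U' (k - 1) i j) * (M (k - 1) i j - M' (k - 1) i j)) / Δt := by
    rw [← sum2_add (fun i j => ((U k i j - U' k i j) - (U (k - 1) i j - U' (k - 1) i j)) / Δt
          * (M k i j - M' k i j))
        (fun i j => ((M k i j - M' k i j) - (M (k - 1) i j - M' (k - 1) i j)) / Δt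
          * (U (k - 1) i j - U' (k - 1) i j)),
      ← sum2_sub' (fun i j => (U k i j - U' k i j) * (M k i j - M' k i j))
        (fun i j => (U (k - 1) i j - U' (k - 1) i j) * (M (k - 1) i j - M' (k - 1) i j)),
      ← sum2_div]
    exact sum2_congr fun i j => by ring
  -- Hamiltonian terms
  have hH : (∑ i : ZMod N, ∑ j : ZMod N,
        (M k i j * (g i j (DHs N (U' (k - 1)) i j) - g i j (DHs N (U (k - 1)) i j)
            - fderiv ℝ (g i j) (DHs N (U (k - 1)) i j)
                (DHs N (U' (k - 1)) i j - DHs N (U (k - 1)) i j))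
          + M' k i j * (g i j (DHs N (U (k - 1)) i j) - g i j (DHs N (U' (k - 1)) i j)
            - fderiv ℝ (g i j) (DHs N (U' (k - 1)) i j)
                (DHs N (U (k - 1)) i j - DHs N (U' (k - 1)) i j))))
      = -(∑ i : ZMod N, ∑ j : ZMod N,
            (g i j (DHs N (U (k - 1)) i j) - g i j (DHs N (U' (k - 1)) i j))
              * (M k i j - M' k i j))
        + (∑ i : ZMod N, ∑ j : ZMod N,
            M k i j * fderiv ℝ (g i j) (DHs N (U (k - 1)) i j)
              (DHs N (U (k - 1)) i j - DHs N (U' (k - 1)) i j))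
        - ∑ i : ZMod N, ∑ j : ZMod N,
            M' k i j * fderiv ℝ (g i j) (DHs N (U' (k - 1)) i j)
              (DHs N (U (k - 1)) i j - DHs N (U' (k - 1)) i j) := by
    have h1 : ∀ i j : ZMod N,
        (M k i j * (g i j (DHs N (U' (k - 1)) i j) - g i j (DHs N (U (k - 1)) i j)
            - fderiv ℝ (g i j) (DHs N (U (k - 1)) i j)
                (DHs N (U' (k - 1)) i j - DHs N (U (k - 1)) i j))
          + M' k i j * (g i j (DHs N (U (k - 1)) i j) - g i j (DHs N (U' (k - 1)) i j)
            - fderiv ℝ (g i j) (DHs N (U' (k - 1)) i j)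
                (DHs N (U (k - 1)) i j - DHs N (U' (k - 1)) i j)))
        = -((g i j (DHs N (U (k - 1)) i j) - g i j (DHs N (U' (k - 1)) i j))
              * (M k i j - M' k i j))
          + M k i j * fderiv ℝ (g i j) (DHs N (U (k - 1)) i j)
              (DHs N (U (k - 1)) i j - DHs N (U' (k - 1)) i j)
          - M' k i j * fderiv ℝ (g i j) (DHs N (U' (k - 1)) i j)
              (DHs N (U (k - 1)) i j - DHs N (U' (k - 1)) i j) := by
      intro i j
      simp only [map_sub]
      ring
    rw [sum2_congr h1]
    simp only [Finset.sum_add_distrib, Finset.sum_sub_distrib, Finset.sum_neg_distrib]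
  rw [hX, hY, hVis, hB1, hB2, hH]
  linarith [hTime]


end A2

/-- Lyapunov property of the Bregman divergence along the discrete HRF. -/
theorem hrf_bregman_lyapunov (N : ℕ) [NeZero N] (NT : ℕ) (hNT : 1 ≤ NT)
    (Δt ν : ℝ) (hΔt : 0 < Δt) (hν : 0 ≤ ν)
    (g : ZMod N → ZMod N → (Fin 4 → ℝ) → ℝ)
    (hg1 : ∀ i j, ContDiff ℝ 1 (g i j))
    (hg2 : ∀ i j, ConvexOn ℝ Set.univ (g i j))
    (f : ℝ → ℝ) (hf : StrictMonoOn f (Set.Ioi 0))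
    (Vh : Grid N)
    (Mstar Ustar : ℕ → Grid N)
    (hstar_feas : ∀ k ∈ Finset.Icc 1 NT,
      (∀ i j, 0 < Mstar k i j) ∧ pairh N (Mstar k) (fun _ _ => 1) = 1)
    (hstar_eq : ∀ k ∈ Finset.Icc 1 NT,
      rkFD N g f Vh ν Δt Mstar Ustar k = 0 ∧ skFD N g ν Δt Mstar Ustar k = 0)
    (S : ℝ) (hS : 0 < S)
    (Ms Us : ℝ → ℕ → Grid N)
    (hcurve_feas : ∀ s ∈ Set.Ico (0 : ℝ) S, ∀ k ∈ Finset.Icc 1 NT,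
      (∀ i j, 0 < Ms s k i j) ∧ pairh N (Ms s k) (fun _ _ => 1) = 1)
    (hcurve_end : ∀ s ∈ Set.Ico (0 : ℝ) S, Ms s 0 = Mstar 0 ∧ Us s NT = Ustar NT)
    (hflow : IsHRFOn N NT g f Vh ν Δt Ms Us (Set.Ico 0 S)) :
    (∀ s ∈ Set.Ico (0 : ℝ) S,
      HasDerivWithinAt (fun t => DE N NT Δt Mstar Ustar (Ms t) (Us t))
        (-(Δt * ∑ k ∈ Finset.Icc 1 NT,
            pairh N (fun i j => rkFD N g f Vh ν Δt (Ms s) (Us s) k i j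
                - rkFD N g f Vh ν Δt Mstar Ustar k i j)
              (fun i j => Ms s k i j - Mstar k i j)
          + Δt * ∑ k ∈ Finset.Icc 1 NT,
            pairh N (fun i j => skFD N g ν Δt (Ms s) (Us s) k i j
                - skFD N g ν Δt Mstar Ustar k i j)
              (fun i j => Us s (k - 1) i j - Ustar (k - 1) i j)))
        (Set.Ico 0 S) s ∧
      -(Δt * ∑ k ∈ Finset.Icc 1 NT,
            pairh N (fun i j => rkFD N g f Vh ν Δt (Ms s) (Us s) k i j
                - rkFD N g f Vh ν Δt Mstar Ustar k i j)
              (fun i j => Ms s k i j - Mstar k i j)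
          + Δt * ∑ k ∈ Finset.Icc 1 NT,
            pairh N (fun i j => skFD N g ν Δt (Ms s) (Us s) k i j
                - skFD N g ν Δt Mstar Ustar k i j)
              (fun i j => Us s (k - 1) i j - Ustar (k - 1) i j)) ≤ 0) ∧
    AntitoneOn (fun t => DE N NT Δt Mstar Ustar (Ms t) (Us t)) (Set.Ico 0 S) := by
  have hgrid : gridh N ≠ 0 := by
    have hN : (N : ℝ) ≠ 0 := Nat.cast_ne_zero.mpr (NeZero.ne N)
    simp [gridh, hN]
  have hh2pos : (0 : ℝ) < gridh N ^ 2 := by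
    have hN : (0 : ℝ) < (N : ℝ) := by
      exact_mod_cast Nat.pos_of_ne_zero (NeZero.ne N)
    have h1 : (0 : ℝ) < gridh N := by
      rw [gridh]
      positivity
    positivity
  have main : ∀ s ∈ Set.Ico (0 : ℝ) S,
      HasDerivWithinAt (fun t => DE N NT Δt Mstar Ustar (Ms t) (Us t))
        (-(Δt * ∑ k ∈ Finset.Icc 1 NT,
            pairh N (fun i j => rkFD N g f Vh ν Δt (Ms s) (Us s) k i j
                - rkFD N g f Vh ν Δt Mstar Ustar k i j)
              (fun i j => Ms s k i j - Mstar k i j)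
          + Δt * ∑ k ∈ Finset.Icc 1 NT,
            pairh N (fun i j => skFD N g ν Δt (Ms s) (Us s) k i j
                - skFD N g ν Δt Mstar Ustar k i j)
              (fun i j => Us s (k - 1) i j - Ustar (k - 1) i j)))
        (Set.Ico 0 S) s ∧
      -(Δt * ∑ k ∈ Finset.Icc 1 NT,
            pairh N (fun i j => rkFD N g f Vh ν Δt (Ms s) (Us s) k i j
                - rkFD N g f Vh ν Δt Mstar Ustar k i j)
              (fun i j => Ms s k i j - Mstar k i j)
          + Δt * ∑ k ∈ Finset.Icc 1 NT,
            pairh N (fun i j => skFD N g ν Δt (Ms s) (Us s) k i j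
                - skFD N g ν Δt Mstar Ustar k i j)
              (fun i j => Us s (k - 1) i j - Ustar (k - 1) i j)) ≤ 0 := by
    intro s hs
    have hr0 : ∀ k ∈ Finset.Icc 1 NT, ∀ i j,
        rkFD N g f Vh ν Δt Mstar Ustar k i j = 0 := by
      intro k hk i j
      have h := (hstar_eq k hk).1
      simpa using congrFun (congrFun h i) j
    have hs0 : ∀ k ∈ Finset.Icc 1 NT, ∀ i j,
        skFD N g ν Δt Mstar Ustar k i j = 0 := by
      intro k hk i j
      have h := (hstar_eq k hk).2
      simpa using congrFun (congrFun h i) j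
    -- node-level derivatives
    have hMd : ∀ k ∈ Finset.Icc 1 NT, ∀ i j, HasDerivWithinAt
        (fun t => Mstar k i j * Real.log (Ms t k i j) - Ms t k i j)
        ((Ms s k i j - Mstar k i j)
          * (rkFD N g f Vh ν Δt (Ms s) (Us s) k i j
              - rbarFD N g f Vh ν Δt (Ms s) (Us s) k)) (Set.Ico 0 S) s := by
      intro k hk i j
      have hm := (hflow s hs k hk).1 i j
      have hpos := (hcurve_feas s hs k hk).1 i j
      have hne : Ms s k i j ≠ 0 := hpos.ne'
      have h2 : HasDerivWithinAt (fun t => Mstar k i j * Real.log (Ms t k i j) - Ms t k i j) _ _ s :=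
        ((hm.log hne).const_mul (Mstar k i j)).sub hm
      convert h2 using 1
      field_simp
      ring
    have hUd : ∀ k ∈ Finset.range NT, ∀ i j, HasDerivWithinAt
        (fun t => Ustar k i j * Us t k i j - Us t k i j ^ 2 / 2)
        ((Us s k i j - Ustar k i j) * skFD N g ν Δt (Ms s) (Us s) (k + 1) i j)
        (Set.Ico 0 S) s := by
      intro k hk i j
      have hk' : k + 1 ∈ Finset.Icc 1 NT := by
        simp only [Finset.mem_range] at hk
        simp only [Finset.mem_Icc]
        omega
      have hu := (hflow s hs (k + 1) hk').2 i j
      simp only [Nat.add_sub_cancel] at hu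
      have h1 : HasDerivWithinAt (fun t => Ustar k i j * Us t k i j - Us t k i j ^ 2 / 2) _ _ s :=
        (hu.const_mul (Ustar k i j)).sub ((hu.fun_pow 2).div_const 2)
      convert h1 using 1
      push_cast
      ring
    -- assemble the derivative of DE
    have hA : HasDerivWithinAt
        (fun t => ∑ k ∈ Finset.Icc 1 NT, ∑ i : ZMod N, ∑ j : ZMod N,
          (Mstar k i j * Real.log (Ms t k i j) - Ms t k i j))
        (∑ k ∈ Finset.Icc 1 NT, ∑ i : ZMod N, ∑ j : ZMod N,
          (Ms s k i j - Mstar k i j)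
            * (rkFD N g f Vh ν Δt (Ms s) (Us s) k i j
                - rbarFD N g f Vh ν Δt (Ms s) (Us s) k)) (Set.Ico 0 S) s :=
      HasDerivWithinAt.fun_sum fun k hk => HasDerivWithinAt.fun_sum fun i _ =>
        HasDerivWithinAt.fun_sum fun j _ => hMd k hk i j
    have hB : HasDerivWithinAt
        (fun t => ∑ k ∈ Finset.range NT, ∑ i : ZMod N, ∑ j : ZMod N,
          (Ustar k i j * Us t k i j - Us t k i j ^ 2 / 2))
        (∑ k ∈ Finset.range NT, ∑ i : ZMod N, ∑ j : ZMod N,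
          (Us s k i j - Ustar k i j) * skFD N g ν Δt (Ms s) (Us s) (k + 1) i j)
        (Set.Ico 0 S) s :=
      HasDerivWithinAt.fun_sum fun k hk => HasDerivWithinAt.fun_sum fun i _ =>
        HasDerivWithinAt.fun_sum fun j _ => hUd k hk i j
    have hC := ((hA.const_mul (Δt * gridh N ^ 2)).add
      (hB.const_mul (Δt * gridh N ^ 2))).neg.const_add (entE N NT Δt Mstar Ustar)
    have hfun : (fun t => DE N NT Δt Mstar Ustar (Ms t) (Us t))
        = (fun t => entE N NT Δt Mstar Ustar
          + -(Δt * gridh N ^ 2 * ∑ k ∈ Finset.Icc 1 NT, ∑ i : ZMod N, ∑ j : ZMod N,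
                (Mstar k i j * Real.log (Ms t k i j) - Ms t k i j)
            + Δt * gridh N ^ 2 * ∑ k ∈ Finset.range NT, ∑ i : ZMod N, ∑ j : ZMod N,
                (Ustar k i j * Us t k i j - Us t k i j ^ 2 / 2))) := by
      funext t
      rw [DE_eq]
      ring
    simp only [Pi.add_apply, Pi.neg_apply] at hC
    rw [← hfun] at hC
    -- identify the derivative value
    have eMs : ∀ k ∈ Finset.Icc 1 NT,
        (∑ i : ZMod N, ∑ j : ZMod N, (Ms s k i j - Mstar k i j)
            * (rkFD N g f Vh ν Δt (Ms s) (Us s) k i j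
                - rbarFD N g f Vh ν Δt (Ms s) (Us s) k))
          = ∑ i : ZMod N, ∑ j : ZMod N,
              (rkFD N g f Vh ν Δt (Ms s) (Us s) k i j
                - rkFD N g f Vh ν Δt Mstar Ustar k i j) * (Ms s k i j - Mstar k i j) := by
      intro k hk
      have h1 := (hcurve_feas s hs k hk).2
      have h2 := (hstar_feas k hk).2
      simp only [pairh, mul_one] at h1 h2
      have hmass : (∑ i : ZMod N, ∑ j : ZMod N, Ms s k i j)
          = ∑ i : ZMod N, ∑ j : ZMod N, Mstar k i j :=
        mul_left_cancel₀ (pow_ne_zero 2 hgrid) (h1.trans h2.symm)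
      have hmass0 : (∑ i : ZMod N, ∑ j : ZMod N, (Ms s k i j - Mstar k i j)) = 0 := by
        rw [sum2_sub' (fun i j => Ms s k i j) (fun i j => Mstar k i j), hmass, sub_self]
      calc (∑ i : ZMod N, ∑ j : ZMod N, (Ms s k i j - Mstar k i j)
            * (rkFD N g f Vh ν Δt (Ms s) (Us s) k i j
                - rbarFD N g f Vh ν Δt (Ms s) (Us s) k))
          = (∑ i : ZMod N, ∑ j : ZMod N,
              ((Ms s k i j - Mstar k i j) * rkFD N g f Vh ν Δt (Ms s) (Us s) k i j
                - rbarFD N g f Vh ν Δt (Ms s) (Us s) k * (Ms s k i j - Mstar k i j))) :=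
            sum2_congr fun i j => by ring
        _ = (∑ i : ZMod N, ∑ j : ZMod N,
              (Ms s k i j - Mstar k i j) * rkFD N g f Vh ν Δt (Ms s) (Us s) k i j)
            - rbarFD N g f Vh ν Δt (Ms s) (Us s) k
              * ∑ i : ZMod N, ∑ j : ZMod N, (Ms s k i j - Mstar k i j) := by
            rw [sum2_sub']
            simp only [← Finset.mul_sum]
        _ = ∑ i : ZMod N, ∑ j : ZMod N,
              (Ms s k i j - Mstar k i j) * rkFD N g f Vh ν Δt (Ms s) (Us s) k i j := by
            rw [hmass0, mul_zero, sub_zero]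
        _ = _ := sum2_congr fun i j => by rw [hr0 k hk i j]; ring
    have eUs : (∑ k ∈ Finset.range NT, ∑ i : ZMod N, ∑ j : ZMod N,
          (Us s k i j - Ustar k i j) * skFD N g ν Δt (Ms s) (Us s) (k + 1) i j)
        = ∑ k ∈ Finset.Icc 1 NT, ∑ i : ZMod N, ∑ j : ZMod N,
            (skFD N g ν Δt (Ms s) (Us s) k i j - skFD N g ν Δt Mstar Ustar k i j)
              * (Us s (k - 1) i j - Ustar (k - 1) i j) := by
      rw [icc_sum_eq (fun k => ∑ i : ZMod N, ∑ j : ZMod N,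
        (skFD N g ν Δt (Ms s) (Us s) k i j - skFD N g ν Δt Mstar Ustar k i j)
          * (Us s (k - 1) i j - Ustar (k - 1) i j)) NT]
      refine Finset.sum_congr rfl fun k hk => ?_
      have hk' : k + 1 ∈ Finset.Icc 1 NT := by
        simp only [Finset.mem_range] at hk
        simp only [Finset.mem_Icc]
        omega
      simp only [Nat.add_sub_cancel]
      exact sum2_congr fun i j => by rw [hs0 (k + 1) hk' i j]; ring
    have hval : -(Δt * gridh N ^ 2 * ∑ k ∈ Finset.Icc 1 NT, ∑ i : ZMod N, ∑ j : ZMod N,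
          (Ms s k i j - Mstar k i j)
            * (rkFD N g f Vh ν Δt (Ms s) (Us s) k i j
                - rbarFD N g f Vh ν Δt (Ms s) (Us s) k)
        + Δt * gridh N ^ 2 * ∑ k ∈ Finset.range NT, ∑ i : ZMod N, ∑ j : ZMod N,
          (Us s k i j - Ustar k i j) * skFD N g ν Δt (Ms s) (Us s) (k + 1) i j)
        = -(Δt * ∑ k ∈ Finset.Icc 1 NT,
            pairh N (fun i j => rkFD N g f Vh ν Δt (Ms s) (Us s) k i j
                - rkFD N g f Vh ν Δt Mstar Ustar k i j)
              (fun i j => Ms s k i j - Mstar k i j)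
          + Δt * ∑ k ∈ Finset.Icc 1 NT,
            pairh N (fun i j => skFD N g ν Δt (Ms s) (Us s) k i j
                - skFD N g ν Δt Mstar Ustar k i j)
              (fun i j => Us s (k - 1) i j - Ustar (k - 1) i j)) := by
      rw [Finset.sum_congr rfl eMs, eUs]
      simp only [pairh, ← Finset.mul_sum]
      ring
    have hDE := hC
    -- the claimed derivative
    have hder : HasDerivWithinAt (fun t => DE N NT Δt Mstar Ustar (Ms t) (Us t))
        (-(Δt * ∑ k ∈ Finset.Icc 1 NT,
            pairh N (fun i j => rkFD N g f Vh ν Δt (Ms s) (Us s) k i j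
                - rkFD N g f Vh ν Δt Mstar Ustar k i j)
              (fun i j => Ms s k i j - Mstar k i j)
          + Δt * ∑ k ∈ Finset.Icc 1 NT,
            pairh N (fun i j => skFD N g ν Δt (Ms s) (Us s) k i j
                - skFD N g ν Δt Mstar Ustar k i j)
              (fun i j => Us s (k - 1) i j - Ustar (k - 1) i j)))
        (Set.Ico 0 S) s := by
      rw [← hval]
      exact hDE
    refine ⟨hder, ?_⟩
    -- nonpositivity via the monotonicity of the discrete MFG operator
    have hkey : ∀ k ∈ Finset.Icc 1 NT,
        (∑ i : ZMod N, ∑ j : ZMod N,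
            (rkFD N g f Vh ν Δt (Ms s) (Us s) k i j
              - rkFD N g f Vh ν Δt Mstar Ustar k i j) * (Ms s k i j - Mstar k i j))
          + ∑ i : ZMod N, ∑ j : ZMod N,
            (skFD N g ν Δt (Ms s) (Us s) k i j - skFD N g ν Δt Mstar Ustar k i j)
              * (Us s (k - 1) i j - Ustar (k - 1) i j)
        = ((∑ i : ZMod N, ∑ j : ZMod N,
              (Us s k i j - Ustar k i j) * (Ms s k i j - Mstar k i j))
            - ∑ i : ZMod N, ∑ j : ZMod N,
              (Us s (k - 1) i j - Ustar (k - 1) i j)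
                * (Ms s (k - 1) i j - Mstar (k - 1) i j)) / Δt
          + (∑ i : ZMod N, ∑ j : ZMod N,
              (Ms s k i j * (g i j (DHs N (Ustar (k - 1)) i j)
                  - g i j (DHs N (Us s (k - 1)) i j)
                  - fderiv ℝ (g i j) (DHs N (Us s (k - 1)) i j)
                      (DHs N (Ustar (k - 1)) i j - DHs N (Us s (k - 1)) i j))
                + Mstar k i j * (g i j (DHs N (Us s (k - 1)) i j)
                  - g i j (DHs N (Ustar (k - 1)) i j)
                  - fderiv ℝ (g i j) (DHs N (Ustar (k - 1)) i j)
                      (DHs N (Us s (k - 1)) i j - DHs N (Ustar (k - 1)) i j))))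
          + ∑ i : ZMod N, ∑ j : ZMod N,
              (f (Ms s k i j) - f (Mstar k i j)) * (Ms s k i j - Mstar k i j) :=
      fun k _ => monotonicity_step g f Vh ν Δt (Ms s) (Us s) Mstar Ustar k
    have htele : (∑ k ∈ Finset.Icc 1 NT,
        ((∑ i : ZMod N, ∑ j : ZMod N,
            (Us s k i j - Ustar k i j) * (Ms s k i j - Mstar k i j))
          - ∑ i : ZMod N, ∑ j : ZMod N,
            (Us s (k - 1) i j - Ustar (k - 1) i j)
              * (Ms s (k - 1) i j - Mstar (k - 1) i j)) / Δt) = 0 := by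
      rw [← Finset.sum_div, tele (fun k => ∑ i : ZMod N, ∑ j : ZMod N,
        (Us s k i j - Ustar k i j) * (Ms s k i j - Mstar k i j)) NT]
      have hU0 : Us s NT = Ustar NT := (hcurve_end s hs).2
      have hM0 : Ms s 0 = Mstar 0 := (hcurve_end s hs).1
      have z1 : (∑ i : ZMod N, ∑ j : ZMod N,
          (Us s NT i j - Ustar NT i j) * (Ms s NT i j - Mstar NT i j)) = 0 := by
        rw [hU0]
        simp
      have z2 : (∑ i : ZMod N, ∑ j : ZMod N,
          (Us s 0 i j - Ustar 0 i j) * (Ms s 0 i j - Mstar 0 i j)) = 0 := by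
        rw [hM0]
        simp
      rw [z1, z2, sub_zero, zero_div]
    have hHnn : ∀ k ∈ Finset.Icc 1 NT, (0 : ℝ) ≤ ∑ i : ZMod N, ∑ j : ZMod N,
        (Ms s k i j * (g i j (DHs N (Ustar (k - 1)) i j)
            - g i j (DHs N (Us s (k - 1)) i j)
            - fderiv ℝ (g i j) (DHs N (Us s (k - 1)) i j)
                (DHs N (Ustar (k - 1)) i j - DHs N (Us s (k - 1)) i j))
          + Mstar k i j * (g i j (DHs N (Us s (k - 1)) i j)
            - g i j (DHs N (Ustar (k - 1)) i j)
            - fderiv ℝ (g i j) (DHs N (Ustar (k - 1)) i j)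
                (DHs N (Us s (k - 1)) i j - DHs N (Ustar (k - 1)) i j))) := by
      intro k hk
      refine Finset.sum_nonneg fun i _ => Finset.sum_nonneg fun j _ => ?_
      have c1 := convex_grad_ineq (g i j) (hg1 i j) (hg2 i j)
        (DHs N (Us s (k - 1)) i j) (DHs N (Ustar (k - 1)) i j)
      have c2 := convex_grad_ineq (g i j) (hg1 i j) (hg2 i j)
        (DHs N (Ustar (k - 1)) i j) (DHs N (Us s (k - 1)) i j)
      have hm := (hcurve_feas s hs k hk).1 i j
      have hm' := (hstar_feas k hk).1 i j
      refine add_nonneg (mul_nonneg hm.le (by linarith)) (mul_nonneg hm'.le (by linarith))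
    have hFnn : ∀ k ∈ Finset.Icc 1 NT, (0 : ℝ) ≤ ∑ i : ZMod N, ∑ j : ZMod N,
        (f (Ms s k i j) - f (Mstar k i j)) * (Ms s k i j - Mstar k i j) := by
      intro k hk
      refine Finset.sum_nonneg fun i _ => Finset.sum_nonneg fun j _ => ?_
      exact fmono_node hf ((hcurve_feas s hs k hk).1 i j) ((hstar_feas k hk).1 i j)
    have htot : (0 : ℝ) ≤ ∑ k ∈ Finset.Icc 1 NT,
        ((∑ i : ZMod N, ∑ j : ZMod N,
            (rkFD N g f Vh ν Δt (Ms s) (Us s) k i j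
              - rkFD N g f Vh ν Δt Mstar Ustar k i j) * (Ms s k i j - Mstar k i j))
          + ∑ i : ZMod N, ∑ j : ZMod N,
            (skFD N g ν Δt (Ms s) (Us s) k i j - skFD N g ν Δt Mstar Ustar k i j)
              * (Us s (k - 1) i j - Ustar (k - 1) i j)) := by
      rw [Finset.sum_congr rfl hkey]
      rw [Finset.sum_add_distrib, Finset.sum_add_distrib, htele, zero_add]
      exact add_nonneg (Finset.sum_nonneg hHnn) (Finset.sum_nonneg hFnn)
    have hfin : -(Δt * ∑ k ∈ Finset.Icc 1 NT,
            pairh N (fun i j => rkFD N g f Vh ν Δt (Ms s) (Us s) k i j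
                - rkFD N g f Vh ν Δt Mstar Ustar k i j)
              (fun i j => Ms s k i j - Mstar k i j)
          + Δt * ∑ k ∈ Finset.Icc 1 NT,
            pairh N (fun i j => skFD N g ν Δt (Ms s) (Us s) k i j
                - skFD N g ν Δt Mstar Ustar k i j)
              (fun i j => Us s (k - 1) i j - Ustar (k - 1) i j))
        = -(Δt * gridh N ^ 2 * ∑ k ∈ Finset.Icc 1 NT,
            ((∑ i : ZMod N, ∑ j : ZMod N,
              (rkFD N g f Vh ν Δt (Ms s) (Us s) k i j
                - rkFD N g f Vh ν Δt Mstar Ustar k i j) * (Ms s k i j - Mstar k i j))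
            + ∑ i : ZMod N, ∑ j : ZMod N,
              (skFD N g ν Δt (Ms s) (Us s) k i j - skFD N g ν Δt Mstar Ustar k i j)
                * (Us s (k - 1) i j - Ustar (k - 1) i j))) := by
      simp only [pairh, ← Finset.mul_sum, Finset.sum_add_distrib]
      ring
    rw [hfin]
    have : (0 : ℝ) ≤ Δt * gridh N ^ 2 * ∑ k ∈ Finset.Icc 1 NT,
        ((∑ i : ZMod N, ∑ j : ZMod N,
            (rkFD N g f Vh ν Δt (Ms s) (Us s) k i j
              - rkFD N g f Vh ν Δt Mstar Ustar k i j) * (Ms s k i j - Mstar k i j))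
          + ∑ i : ZMod N, ∑ j : ZMod N,
            (skFD N g ν Δt (Ms s) (Us s) k i j - skFD N g ν Δt Mstar Ustar k i j)
              * (Us s (k - 1) i j - Ustar (k - 1) i j)) :=
      mul_nonneg (mul_nonneg hΔt.le hh2pos.le) htot
    linarith
  refine ⟨main, ?_⟩
  refine antitoneOn_of_hasDerivWithinAt_nonpos
    (f' := fun x => -(Δt * ∑ k ∈ Finset.Icc 1 NT,
        pairh N (fun i j => rkFD N g f Vh ν Δt (Ms x) (Us x) k i j
            - rkFD N g f Vh ν Δt Mstar Ustar k i j)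
          (fun i j => Ms x k i j - Mstar k i j)
      + Δt * ∑ k ∈ Finset.Icc 1 NT,
        pairh N (fun i j => skFD N g ν Δt (Ms x) (Us x) k i j
            - skFD N g ν Δt Mstar Ustar k i j)
          (fun i j => Us x (k - 1) i j - Ustar (k - 1) i j)))
    (convex_Ico 0 S)
    (fun x hx => ((main x hx).1).continuousWithinAt) (fun x hx => ?_) (fun x hx => ?_)
  · have hx' : x ∈ Set.Ico (0 : ℝ) S := by
      rw [interior_Ico] at hx
      exact Set.Ioo_subset_Ico_self hx
    exact ((main x hx').1).mono interior_subset
  · have hx' : x ∈ Set.Ico (0 : ℝ) S := by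
      rw [interior_Ico] at hx
      exact Set.Ioo_subset_Ico_self hx
    exact (main x hx').2
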